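/- The charged Hawking mass of any spherically symmetric graph in Reissner–Nordström(-AdS) equals the mass parameter. Let n ≥ 3, M, Q ∈ ℝ, λ ≥ 0, V_RN(r) = 1 − 2M/r^{n−2} + Q²/r^{2(n−2)} + λ·r², let I ⊂ (0,∞) be an interval with V_RN > 0, and let f : I → ℝ be differentiable with |V_RN·f′| < 1. With V_f = V_RN/(1 − (V_RN·f′)²), k_S = −(n−1)·V_RN·f′·√(V_f)/r, and charge q = Q, the charged Hawking mass satisfies m_CH(r) = (r^{n−2}/2)·[1 − V_f(r) + r²·k_S(r)²/(n−1)²] + λ·r^n/2 + Q²/(2·r^{n−2}) = M for every r ∈ I. -/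
import Mathlib


open Real Filter

/-- The Reissner–Nordström(-AdS) metric function
`V_RN(r) = 1 - 2M/r^{n-2} + Q²/r^{2(n-2)} + λ r²`. -/
noncomputable def VRN (n : ℕ) (M Q lam : ℝ) (r : ℝ) : ℝ :=
  1 - 2 * M / r ^ (n - 2) + Q ^ 2 / r ^ (2 * (n - 2)) + lam * r ^ 2

/-- Radial metric function induced on the graph `t = f(r)`:
`V_f = V_RN / (1 - (V_RN f')²)`. -/
noncomputable def Vgraph (n : ℕ) (M Q lam : ℝ) (f : ℝ → ℝ) (r : ℝ) : ℝ :=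
  VRN n M Q lam r / (1 - (VRN n M Q lam r * deriv f r) ^ 2)

/-- Spherical part of the extrinsic curvature of the graph:
`k_S = -(n-1) V_RN f' √(V_f)/r`. -/
noncomputable def kSgraph (n : ℕ) (M Q lam : ℝ) (f : ℝ → ℝ) (r : ℝ) : ℝ :=
  -(((n : ℝ) - 1) * VRN n M Q lam r * deriv f r * Real.sqrt (Vgraph n M Q lam f r)) / r

/-- Radial part of the extrinsic curvature of the graph: `k_I = (d/dr)[r k_S/(n-1)]`. -/
noncomputable def kIgraph (n : ℕ) (M Q lam : ℝ) (f : ℝ → ℝ) (r : ℝ) : ℝ :=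
  deriv (fun ρ => ρ * kSgraph n M Q lam f ρ / ((n : ℝ) - 1)) r

/-- Radial electric field on the graph: `E_I = √((n-1)(n-2)/2)·Q/(r^{n-1}√(V_f))`. -/
noncomputable def EIgraph (n : ℕ) (M Q lam : ℝ) (f : ℝ → ℝ) (r : ℝ) : ℝ :=
  Real.sqrt (((n : ℝ) - 1) * ((n : ℝ) - 2) / 2) * Q
    / (r ^ (n - 1) * Real.sqrt (Vgraph n M Q lam f r))

/-- Scalar curvature of the induced metric: `R_f = (n-1) r^{1-n} (d/dr)[r^{n-2}(1 - V_f)]`. -/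
noncomputable def Rgraph (n : ℕ) (M Q lam : ℝ) (f : ℝ → ℝ) (r : ℝ) : ℝ :=
  ((n : ℝ) - 1) / r ^ (n - 1) * deriv (fun ρ => ρ ^ (n - 2) * (1 - Vgraph n M Q lam f ρ)) r

/-- The charged Hawking mass of any spherically symmetric graph `t = f(r)` in
Reissner–Nordström(-AdS) equals the mass parameter `M`:
`(r^{n-2}/2)[1 - V_f + r² k_S²/(n-1)²] + λ r^n/2 + Q²/(2 r^{n-2}) = M`. -/
theorem RN_graph_chargedHawkingMass (n : ℕ) (hn : 3 ≤ n) (M Q lam : ℝ) (hlam : 0 ≤ lam)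
    (s : Set ℝ) (hs : s ⊆ Set.Ioi (0 : ℝ))
    (hVRN : ∀ r ∈ s, 0 < VRN n M Q lam r)
    (f : ℝ → ℝ) (hf : ∀ r ∈ s, DifferentiableAt ℝ f r)
    (hspacelike : ∀ r ∈ s, |VRN n M Q lam r * deriv f r| < 1) :
    ∀ r ∈ s,
      r ^ (n - 2) / 2 *
          (1 - Vgraph n M Q lam f r + r ^ 2 * kSgraph n M Q lam f r ^ 2 / ((n : ℝ) - 1) ^ 2)
        + lam * r ^ n / 2 + Q ^ 2 / (2 * r ^ (n - 2)) = M := by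
  intro r hr
  have hr0 : 0 < r := hs hr
  have hV := hVRN r hr
  set V := VRN n M Q lam r with hVdef
  set u := V * deriv f r with hu
  have hu2 : u ^ 2 < 1 := by
    have := hspacelike r hr
    rw [← hVdef] at this
    nlinarith [abs_nonneg u, sq_abs u, abs_lt.mp this]
  have hD : 0 < 1 - u ^ 2 := by linarith
  have hVf : Vgraph n M Q lam f r = V / (1 - u ^ 2) := rfl
  have hVfpos : 0 ≤ Vgraph n M Q lam f r := by
    rw [hVf]; positivity
  have hn1 : ((n : ℝ) - 1) ≠ 0 := by
    have : (3 : ℝ) ≤ (n : ℝ) := by exact_mod_cast hn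
    nlinarith
  -- simplify the kS² term
  have hkS : r ^ 2 * kSgraph n M Q lam f r ^ 2 / ((n : ℝ) - 1) ^ 2
      = u ^ 2 * Vgraph n M Q lam f r := by
    rw [kSgraph, ← hVdef, hu]
    rw [div_pow, neg_pow]
    have hsq : Real.sqrt (Vgraph n M Q lam f r) ^ 2 = Vgraph n M Q lam f r :=
      Real.sq_sqrt hVfpos
    field_simp
    ring_nf
    rw [hsq]
  rw [hkS, hVf]
  have hkey : 1 - V / (1 - u ^ 2) + u ^ 2 * (V / (1 - u ^ 2)) = 1 - V := by
    field_simp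
    ring
  rw [hkey, hVdef, VRN]
  have hrn : (r : ℝ) ^ (n - 2) ≠ 0 := by positivity
  have h2 : r ^ (2 * (n - 2)) = r ^ (n - 2) * r ^ (n - 2) := by
    rw [two_mul, pow_add]
  have hrn2 : r ^ n = r ^ (n - 2) * r ^ 2 := by
    rw [← pow_add]
    congr 1
    omega
  rw [h2, hrn2]
  field_simp
  ring
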